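/- For the Chaplygin case b = 0, c = 1: with H₀ = (1/2)(M₁²+M₂²)+M₃²+(1/2)(α₁²−α₂²) and K₀ = (M₁²+M₂²)² + 2α₃²(M₁²−M₂²) + α₃⁴, the e*(3) Lie–Poisson bracket gives {H₀,K₀} = 8α₃M₁M₂(α₁M₁+α₂M₂+α₃M₃); in particular {H₀,K₀} vanishes identically on the level set α₁M₁+α₂M₂+α₃M₃ = 0. -/

import Mathlib

/-- Phase space ℝ⁶ with coordinates (M₁,M₂,M₃,α₁,α₂,α₃) = (x 0,…,x 5). -/
abbrev V6 := Fin 6 → ℝ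

/-- Partial derivative of `f` in the `i`-th coordinate direction at `x`. -/
noncomputable def pd (f : V6 → ℝ) (i : Fin 6) (x : V6) : ℝ :=
  fderiv ℝ f x (Pi.single i 1)

/-- Index of M_i among the 6 coordinates. -/
def Mi (i : Fin 3) : Fin 6 := ⟨i.1, by omega⟩
/-- Index of α_i among the 6 coordinates. -/
def Ai (i : Fin 3) : Fin 6 := ⟨i.1 + 3, by omega⟩

/-- Levi-Civita symbol on {0,1,2}. -/
noncomputable def eps (i j k : Fin 3) : ℝ :=
  ((((i.1 : ℤ) - j.1) * ((j.1 : ℤ) - k.1) * ((k.1 : ℤ) - i.1) : ℤ) : ℝ) / 2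

/-- The e*(3) Lie–Poisson bracket:
{f,g} = Σ ε_{ijk} ( M_k ∂f/∂M_i ∂g/∂M_j + α_k (∂f/∂M_i ∂g/∂α_j + ∂f/∂α_i ∂g/∂M_j) ). -/
noncomputable def pb (f g : V6 → ℝ) (x : V6) : ℝ :=
  ∑ i : Fin 3, ∑ j : Fin 3, ∑ k : Fin 3, eps i j k *
    ( x (Mi k) * pd f (Mi i) x * pd g (Mi j) x
      + x (Ai k) * (pd f (Mi i) x * pd g (Ai j) x + pd f (Ai i) x * pd g (Mi j) x) )

/-- Chaplygin Hamiltonian (b = 0, c = 1). -/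
noncomputable def H0 : V6 → ℝ := fun x =>
  (1/2) * ((x 0)^2 + (x 1)^2) + (x 2)^2 + (1/2) * ((x 3)^2 - (x 4)^2)

/-- Chaplygin integral K₀. -/
noncomputable def K0 : V6 → ℝ := fun x =>
  ((x 0)^2 + (x 1)^2)^2 + 2*(x 5)^2*((x 0)^2 - (x 1)^2) + (x 5)^4

lemma pd_eq {f : V6 → ℝ} {L : V6 →L[ℝ] ℝ} {x : V6} (h : HasFDerivAt f L x) (i : Fin 6) :
    pd f i x = L (Pi.single i 1) := by rw [pd, h.fderiv]

lemma hcoord (i : Fin 6) (x : V6) :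
    HasFDerivAt (fun x : V6 => x i) (ContinuousLinearMap.proj i : V6 →L[ℝ] ℝ) x :=
  hasFDerivAt_apply (𝕜 := ℝ) i x

lemma fpow {f : V6 → ℝ} {L : V6 →L[ℝ] ℝ} {x : V6} (h : HasFDerivAt f L x) (n : ℕ) :
    HasFDerivAt (fun y => f y ^ n) (((n : ℝ) * f x ^ (n - 1)) • L) x := by
  exact (hasDerivAt_pow n (f x)).comp_hasFDerivAt x h

lemma pd_H0_0 (x : V6) : pd H0 0 x = x 0 := by
  have h := (((((fpow (hcoord 0 x) 2).add (fpow (hcoord 1 x) 2)).const_mul ((1:ℝ)/2)).add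
      (fpow (hcoord 2 x) 2)).add
      (((fpow (hcoord 3 x) 2).sub (fpow (hcoord 4 x) 2)).const_mul ((1:ℝ)/2)))
  rw [pd_eq (f := H0) (x := x) h]
  simp [ContinuousLinearMap.add_apply, ContinuousLinearMap.smul_apply,
    ContinuousLinearMap.sub_apply, ContinuousLinearMap.proj_apply, Pi.single_apply]
  try ring

lemma pd_H0_1 (x : V6) : pd H0 1 x = x 1 := by
  have h := (((((fpow (hcoord 0 x) 2).add (fpow (hcoord 1 x) 2)).const_mul ((1:ℝ)/2)).add
      (fpow (hcoord 2 x) 2)).add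
      (((fpow (hcoord 3 x) 2).sub (fpow (hcoord 4 x) 2)).const_mul ((1:ℝ)/2)))
  rw [pd_eq (f := H0) (x := x) h]
  simp [ContinuousLinearMap.add_apply, ContinuousLinearMap.smul_apply,
    ContinuousLinearMap.sub_apply, ContinuousLinearMap.proj_apply, Pi.single_apply]
  try ring

lemma pd_H0_2 (x : V6) : pd H0 2 x = 2 * x 2 := by
  have h := (((((fpow (hcoord 0 x) 2).add (fpow (hcoord 1 x) 2)).const_mul ((1:ℝ)/2)).add
      (fpow (hcoord 2 x) 2)).add
      (((fpow (hcoord 3 x) 2).sub (fpow (hcoord 4 x) 2)).const_mul ((1:ℝ)/2)))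
  rw [pd_eq (f := H0) (x := x) h]
  simp [ContinuousLinearMap.add_apply, ContinuousLinearMap.smul_apply,
    ContinuousLinearMap.sub_apply, ContinuousLinearMap.proj_apply, Pi.single_apply]
  try ring

lemma pd_H0_3 (x : V6) : pd H0 3 x = x 3 := by
  have h := (((((fpow (hcoord 0 x) 2).add (fpow (hcoord 1 x) 2)).const_mul ((1:ℝ)/2)).add
      (fpow (hcoord 2 x) 2)).add
      (((fpow (hcoord 3 x) 2).sub (fpow (hcoord 4 x) 2)).const_mul ((1:ℝ)/2)))
  rw [pd_eq (f := H0) (x := x) h]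
  simp [ContinuousLinearMap.add_apply, ContinuousLinearMap.smul_apply,
    ContinuousLinearMap.sub_apply, ContinuousLinearMap.proj_apply, Pi.single_apply]
  try ring

lemma pd_H0_4 (x : V6) : pd H0 4 x = -x 4 := by
  have h := (((((fpow (hcoord 0 x) 2).add (fpow (hcoord 1 x) 2)).const_mul ((1:ℝ)/2)).add
      (fpow (hcoord 2 x) 2)).add
      (((fpow (hcoord 3 x) 2).sub (fpow (hcoord 4 x) 2)).const_mul ((1:ℝ)/2)))
  rw [pd_eq (f := H0) (x := x) h]
  simp [ContinuousLinearMap.add_apply, ContinuousLinearMap.smul_apply,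
    ContinuousLinearMap.sub_apply, ContinuousLinearMap.proj_apply, Pi.single_apply]
  try ring

lemma pd_H0_5 (x : V6) : pd H0 5 x = (0:ℝ) := by
  have h := (((((fpow (hcoord 0 x) 2).add (fpow (hcoord 1 x) 2)).const_mul ((1:ℝ)/2)).add
      (fpow (hcoord 2 x) 2)).add
      (((fpow (hcoord 3 x) 2).sub (fpow (hcoord 4 x) 2)).const_mul ((1:ℝ)/2)))
  rw [pd_eq (f := H0) (x := x) h]
  simp [ContinuousLinearMap.add_apply, ContinuousLinearMap.smul_apply,
    ContinuousLinearMap.sub_apply, ContinuousLinearMap.proj_apply, Pi.single_apply]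
  try ring

lemma pd_K0_0 (x : V6) : pd K0 0 x = 4 * x 0 * ((x 0)^2 + (x 1)^2) + 4 * (x 5)^2 * x 0 := by
  have h := ((fpow ((fpow (hcoord 0 x) 2).add (fpow (hcoord 1 x) 2)) 2).add
      (((fpow (hcoord 5 x) 2).const_mul (2:ℝ)).mul
        ((fpow (hcoord 0 x) 2).sub (fpow (hcoord 1 x) 2)))).add (fpow (hcoord 5 x) 4)
  rw [pd_eq (f := K0) (x := x) h]
  simp [ContinuousLinearMap.add_apply, ContinuousLinearMap.smul_apply,
    ContinuousLinearMap.sub_apply, ContinuousLinearMap.proj_apply, Pi.single_apply]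
  try ring

lemma pd_K0_1 (x : V6) : pd K0 1 x = 4 * x 1 * ((x 0)^2 + (x 1)^2) - 4 * (x 5)^2 * x 1 := by
  have h := ((fpow ((fpow (hcoord 0 x) 2).add (fpow (hcoord 1 x) 2)) 2).add
      (((fpow (hcoord 5 x) 2).const_mul (2:ℝ)).mul
        ((fpow (hcoord 0 x) 2).sub (fpow (hcoord 1 x) 2)))).add (fpow (hcoord 5 x) 4)
  rw [pd_eq (f := K0) (x := x) h]
  simp [ContinuousLinearMap.add_apply, ContinuousLinearMap.smul_apply,
    ContinuousLinearMap.sub_apply, ContinuousLinearMap.proj_apply, Pi.single_apply]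
  try ring

lemma pd_K0_2 (x : V6) : pd K0 2 x = (0:ℝ) := by
  have h := ((fpow ((fpow (hcoord 0 x) 2).add (fpow (hcoord 1 x) 2)) 2).add
      (((fpow (hcoord 5 x) 2).const_mul (2:ℝ)).mul
        ((fpow (hcoord 0 x) 2).sub (fpow (hcoord 1 x) 2)))).add (fpow (hcoord 5 x) 4)
  rw [pd_eq (f := K0) (x := x) h]
  simp [ContinuousLinearMap.add_apply, ContinuousLinearMap.smul_apply,
    ContinuousLinearMap.sub_apply, ContinuousLinearMap.proj_apply, Pi.single_apply]
  try ring

lemma pd_K0_3 (x : V6) : pd K0 3 x = (0:ℝ) := by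
  have h := ((fpow ((fpow (hcoord 0 x) 2).add (fpow (hcoord 1 x) 2)) 2).add
      (((fpow (hcoord 5 x) 2).const_mul (2:ℝ)).mul
        ((fpow (hcoord 0 x) 2).sub (fpow (hcoord 1 x) 2)))).add (fpow (hcoord 5 x) 4)
  rw [pd_eq (f := K0) (x := x) h]
  simp [ContinuousLinearMap.add_apply, ContinuousLinearMap.smul_apply,
    ContinuousLinearMap.sub_apply, ContinuousLinearMap.proj_apply, Pi.single_apply]
  try ring

lemma pd_K0_4 (x : V6) : pd K0 4 x = (0:ℝ) := by
  have h := ((fpow ((fpow (hcoord 0 x) 2).add (fpow (hcoord 1 x) 2)) 2).add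
      (((fpow (hcoord 5 x) 2).const_mul (2:ℝ)).mul
        ((fpow (hcoord 0 x) 2).sub (fpow (hcoord 1 x) 2)))).add (fpow (hcoord 5 x) 4)
  rw [pd_eq (f := K0) (x := x) h]
  simp [ContinuousLinearMap.add_apply, ContinuousLinearMap.smul_apply,
    ContinuousLinearMap.sub_apply, ContinuousLinearMap.proj_apply, Pi.single_apply]
  try ring

lemma pd_K0_5 (x : V6) : pd K0 5 x = 4 * x 5 * ((x 0)^2 - (x 1)^2) + 4 * (x 5)^3 := by
  have h := ((fpow ((fpow (hcoord 0 x) 2).add (fpow (hcoord 1 x) 2)) 2).add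
      (((fpow (hcoord 5 x) 2).const_mul (2:ℝ)).mul
        ((fpow (hcoord 0 x) 2).sub (fpow (hcoord 1 x) 2)))).add (fpow (hcoord 5 x) 4)
  rw [pd_eq (f := K0) (x := x) h]
  simp [ContinuousLinearMap.add_apply, ContinuousLinearMap.smul_apply,
    ContinuousLinearMap.sub_apply, ContinuousLinearMap.proj_apply, Pi.single_apply]
  try ring

theorem bracket_H0_K0 (x : V6) :
    pb H0 K0 x = 8 * x 5 * x 0 * x 1 * (x 3 * x 0 + x 4 * x 1 + x 5 * x 2) ∧
    (x 3 * x 0 + x 4 * x 1 + x 5 * x 2 = 0 → pb H0 K0 x = 0) := by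
  have key : pb H0 K0 x = 8 * x 5 * x 0 * x 1 * (x 3 * x 0 + x 4 * x 1 + x 5 * x 2) := by
    have m0 : Mi 0 = 0 := rfl
    have m1 : Mi 1 = 1 := rfl
    have m2 : Mi 2 = 2 := rfl
    have a0 : Ai 0 = 3 := rfl
    have a1 : Ai 1 = 4 := rfl
    have a2 : Ai 2 = 5 := rfl
    simp only [pb, Fin.sum_univ_three, m0, m1, m2, a0, a1, a2,
      pd_H0_0, pd_H0_1, pd_H0_2, pd_H0_3, pd_H0_4, pd_H0_5,
      pd_K0_0, pd_K0_1, pd_K0_2, pd_K0_3, pd_K0_4, pd_K0_5, eps]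
    norm_num
    ring
  exact ⟨key, fun h => by rw [key, h]; ring⟩
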